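/- Let (V,ℬ) be a PBD(v,K,1) with v ≥ 2 and 2 ≤ K_min, and let Φ be the n×N matrix of Construction con1. Then Φ is ε-equiangular with ε = (K_max−K_min)/(K_min−1). -/

import Mathlib

open scoped BigOperators

noncomputable def welch (n N : ℕ) : ℝ :=
  Real.sqrt (((N : ℝ) - n) / (((N : ℝ) - 1) * n))

/-- Normalised absolute inner product of columns `i` and `j` of `Φ`. -/
noncomputable def colCoh {m ι : Type*} [Fintype m] (Φ : Matrix m ι ℂ) (i j : ι) : ℝ :=
  ‖∑ r, (starRingEnd ℂ) (Φ r i) * Φ r j‖ /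
    (Real.sqrt (∑ r, ‖Φ r i‖ ^ 2) * Real.sqrt (∑ r, ‖Φ r j‖ ^ 2))

/-- `(ℓ₁,t)`-recoverability: every `t`-sparse `x` is the unique `ℓ₁`-minimizer among
solutions `z` of `Φ z = Φ x`. -/
def Recoverable {m ι : Type*} [Fintype m] [Fintype ι] [DecidableEq ι]
    (Φ : Matrix m ι ℂ) (t : ℕ) : Prop :=
  ∀ x : ι → ℂ, (Finset.univ.filter (fun i => x i ≠ 0)).card ≤ t →
    ∀ z : ι → ℂ, Φ.mulVec z = Φ.mulVec x → z ≠ x →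
      ∑ i, ‖x i‖ < ∑ i, ‖z i‖
/-- `B` is the block set of a pairwise balanced design with index `λ = 1` and block
sizes in `K`. -/
def IsPBD {V : Type*} [DecidableEq V] (B : Finset (Finset V)) (K : Finset ℕ) : Prop :=
  (∀ b ∈ B, b.card ∈ K) ∧
  ∀ x y : V, x ≠ y → ∃! b : Finset V, b ∈ B ∧ x ∈ b ∧ y ∈ b

/-- The replication number of the point `x`: the number of blocks containing `x`. -/
def repl {V : Type*} [DecidableEq V] (B : Finset (Finset V)) (x : V) : ℕ :=
  (B.filter (fun b => x ∈ b)).card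

/-- A complex Hadamard matrix of order `r`. -/
def IsComplexHadamard {r : ℕ} (H : Matrix (Fin r) (Fin r) ℂ) : Prop :=
  (∀ i j, ‖H i j‖ = 1) ∧ H * H.conjTranspose = (r : ℂ) • 1

/-- Construction con1: rows indexed by blocks, columns indexed by pairs `(x,j)` with
`x ∈ V` and `j < r_x + 1`; the entry in row `B` and column `(x,j)` is
`(1/√(r_x+1))·(H_x)_{σ_x(B), j}` if `x ∈ B` and `0` otherwise, where `σ_x` picks out
distinct non-initial rows of `H_x`. -/
noncomputable def con1 {V : Type*} [DecidableEq V] (B : Finset (Finset V))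
    (H : ∀ x : V, Matrix (Fin (repl B x + 1)) (Fin (repl B x + 1)) ℂ)
    (σ : ∀ x : V, {b : Finset V // b ∈ B ∧ x ∈ b} → Fin (repl B x + 1)) :
    Matrix {b : Finset V // b ∈ B} (Σ x : V, Fin (repl B x + 1)) ℂ :=
  fun b c =>
    if h : c.1 ∈ b.1 then
      ((Real.sqrt (repl B c.1 + 1))⁻¹ : ℝ) * H c.1 (σ c.1 ⟨b.1, b.2, h⟩) c.2
    else 0


set_option linter.unusedSectionVars false
set_option maxHeartbeats 1000000
open Finset

section aux
variable {V : Type*} [Fintype V] [DecidableEq V] {B : Finset (Finset V)} {K : Finset ℕ}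

lemma pbd_point_sum (hPBD : IsPBD B K) (x : V) :
    ∑ b ∈ B.filter (fun b => x ∈ b), (b.card - 1) = Fintype.card V - 1 := by
  have hdisj : ∀ b1 ∈ B.filter (fun b => x ∈ b), ∀ b2 ∈ B.filter (fun b => x ∈ b),
      b1 ≠ b2 → Disjoint (b1.erase x) (b2.erase x) := by
    intro b1 h1 b2 h2 hne
    simp only [mem_filter] at h1 h2
    rw [Finset.disjoint_left]
    intro y hy1 hy2
    rw [mem_erase] at hy1 hy2
    obtain ⟨b0, -, hu⟩ := hPBD.2 x y (Ne.symm hy1.1)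
    exact hne ((hu b1 ⟨h1.1, h1.2, hy1.2⟩).trans (hu b2 ⟨h2.1, h2.2, hy2.2⟩).symm)
  have hbU : (B.filter (fun b => x ∈ b)).biUnion (fun b => b.erase x)
      = Finset.univ.erase x := by
    ext y
    simp only [mem_biUnion, mem_filter, mem_erase, Finset.mem_univ, and_true]
    constructor
    · rintro ⟨b, ⟨_, _⟩, hy, _⟩; exact hy
    · intro hy
      obtain ⟨b, hb, _⟩ := hPBD.2 x y (Ne.symm hy)
      exact ⟨b, ⟨hb.1, hb.2.1⟩, hy, hb.2.2⟩
  have := Finset.card_biUnion hdisj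
  rw [hbU, Finset.card_erase_of_mem (Finset.mem_univ x), Finset.card_univ] at this
  rw [this]
  apply Finset.sum_congr rfl
  intro b hb
  rw [mem_filter] at hb
  rw [Finset.card_erase_of_mem hb.2]

lemma repl_pos (hPBD : IsPBD B K) (hv : 2 ≤ Fintype.card V) (x : V) : 1 ≤ repl B x := by
  obtain ⟨y, hy⟩ : ∃ y : V, y ≠ x := Fintype.exists_ne_of_one_lt_card hv x
  obtain ⟨b, hb, _⟩ := hPBD.2 x y (Ne.symm hy)
  exact Finset.card_pos.2 ⟨b, Finset.mem_filter.2 ⟨hb.1, hb.2.1⟩⟩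

lemma repl_bounds (hKne : K.Nonempty) (hPBD : IsPBD B K) (x : V) :
    (K.min' hKne - 1) * repl B x ≤ Fintype.card V - 1 ∧
    Fintype.card V - 1 ≤ (K.max' hKne - 1) * repl B x := by
  have h1 : ∀ b ∈ B.filter (fun b => x ∈ b), K.min' hKne - 1 ≤ b.card - 1 ∧
      b.card - 1 ≤ K.max' hKne - 1 := by
    intro b hb
    rw [mem_filter] at hb
    have := hPBD.1 b hb.1
    exact ⟨Nat.sub_le_sub_right (K.min'_le _ this) 1,
      Nat.sub_le_sub_right (K.le_max' _ this) 1⟩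
  constructor
  · rw [← pbd_point_sum hPBD x]
    calc (K.min' hKne - 1) * repl B x = ∑ _b ∈ B.filter (fun b => x ∈ b), (K.min' hKne - 1) := by
          rw [Finset.sum_const, repl]; ring
      _ ≤ _ := Finset.sum_le_sum (fun b hb => (h1 b hb).1)
  · rw [← pbd_point_sum hPBD x]
    calc ∑ b ∈ B.filter (fun b => x ∈ b), (b.card - 1)
        ≤ ∑ _b ∈ B.filter (fun b => x ∈ b), (K.max' hKne - 1) :=
          Finset.sum_le_sum (fun b hb => (h1 b hb).2)
      _ = _ := by rw [Finset.sum_const, repl]; ring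

lemma repl_sum : ∑ x : V, repl B x = ∑ b ∈ B, b.card := by
  simp only [repl, Finset.card_filter]
  rw [Finset.sum_comm]
  apply Finset.sum_congr rfl
  intro b _
  rw [← Finset.card_filter]
  rw [Finset.filter_mem_eq_inter, Finset.univ_inter]

lemma pair_count (hPBD : IsPBD B K) :
    ∑ b ∈ B, b.card * (b.card - 1) = Fintype.card V * (Fintype.card V - 1) := by
  have h1 : ∀ x : V, ∑ b ∈ B, (if x ∈ b then b.card - 1 else 0) = Fintype.card V - 1 := by
    intro x
    rw [← Finset.sum_filter, pbd_point_sum hPBD x]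
  calc ∑ b ∈ B, b.card * (b.card - 1)
      = ∑ b ∈ B, ∑ x : V, (if x ∈ b then b.card - 1 else 0) := by
        apply Finset.sum_congr rfl
        intro b _
        rw [Finset.sum_ite_mem, Finset.univ_inter, Finset.sum_const, smul_eq_mul]
    _ = ∑ x : V, ∑ b ∈ B, (if x ∈ b then b.card - 1 else 0) := Finset.sum_comm
    _ = ∑ _x : V, (Fintype.card V - 1) := by
        exact Finset.sum_congr rfl (fun x _ => h1 x)
    _ = _ := by rw [Finset.sum_const, Finset.card_univ, smul_eq_mul]


lemma welch_core {a b v T n : ℝ} (ha : 1 ≤ a) (hab : a ≤ b) (hv : 2 ≤ v) (hn : 1 ≤ n)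
    (h1 : a * n ≤ T) (h2 : T ≤ b * n) (h3 : (a+1) * T ≤ v * (v-1))
    (h4 : v * (v-1) ≤ (b+1) * T) :
    a / (v-1) ≤ Real.sqrt ((v + T) / ((v + T + n - 1) * n)) ∧
    Real.sqrt ((v + T) / ((v + T + n - 1) * n)) ≤ b / (v-1) := by
  have hT : 0 ≤ T := le_trans (by nlinarith) h1
  have hY : 0 < (v + T + n - 1) * n := by nlinarith
  have hv1 : 0 < v - 1 := by linarith
  have hlow : a^2 * ((v + T + n - 1) * n) ≤ (v + T) * (v-1)^2 := by
    nlinarith [mul_nonneg (sub_nonneg.2 h3) (by nlinarith : (0:ℝ) ≤ T + v - 1),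
      mul_nonneg (sub_nonneg.2 h1) (by nlinarith : (0:ℝ) ≤ a * (v + T + n - 1)),
      mul_nonneg (sub_nonneg.2 h1) hT]
  have hhigh : (v + T) * (v-1)^2 ≤ b^2 * ((v + T + n - 1) * n) := by
    nlinarith [mul_nonneg (sub_nonneg.2 h4) (by nlinarith : (0:ℝ) ≤ T + v - 1),
      mul_nonneg (sub_nonneg.2 h2) (by nlinarith : (0:ℝ) ≤ b * (v + T + n - 1)),
      mul_nonneg (sub_nonneg.2 h2) hT]
  constructor
  · rw [show a / (v-1) = Real.sqrt ((a / (v-1))^2) from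
      (Real.sqrt_sq (by positivity)).symm]
    apply Real.sqrt_le_sqrt
    rw [div_pow, div_le_div_iff₀ (by positivity) hY]
    nlinarith
  · rw [show b / (v-1) = Real.sqrt ((b / (v-1))^2) from
      (Real.sqrt_sq (div_nonneg (by linarith) hv1.le)).symm]
    apply Real.sqrt_le_sqrt
    rw [div_pow, div_le_div_iff₀ hY (by positivity)]
    nlinarith


variable {V : Type*} [Fintype V] [DecidableEq V] {B : Finset (Finset V)}

lemma had_col {r : ℕ} {H : Matrix (Fin r) (Fin r) ℂ} (hH : IsComplexHadamard H)
    (j l : Fin r) :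
    ∑ i, (starRingEnd ℂ) (H i j) * H i l = if j = l then (r : ℂ) else 0 := by
  have hr : (r : ℂ) ≠ 0 := Nat.cast_ne_zero.2 j.pos.ne'
  have h1 : H * ((r : ℂ)⁻¹ • H.conjTranspose) = 1 := by
    rw [Matrix.mul_smul, hH.2, smul_smul, inv_mul_cancel₀ hr, one_smul]
  have h2 : H.conjTranspose * H = (r : ℂ) • 1 := by
    have h3 := mul_eq_one_comm.mp h1
    calc H.conjTranspose * H = (r : ℂ) • (((r : ℂ)⁻¹ • H.conjTranspose) * H) := by
          rw [Matrix.smul_mul, smul_smul, mul_inv_cancel₀ hr, one_smul]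
      _ = (r : ℂ) • 1 := by rw [h3]
  have h4 := congrFun (congrFun h2 j) l
  rw [Matrix.mul_apply] at h4
  simp only [Matrix.conjTranspose_apply, Matrix.smul_apply, Matrix.one_apply] at h4
  have h5 : ∑ x : Fin r, star (H x j) * H x l = if j = l then (r : ℂ) else 0 := by
    rw [h4]; split <;> simp
  exact h5

variable {V : Type*} [Fintype V] [DecidableEq V] {B : Finset (Finset V)}

lemma card_subtype_filter (x : V) :
    ((Finset.univ : Finset {b : Finset V // b ∈ B}).filter (fun b => x ∈ b.1)).card
      = repl B x := by
  rw [Finset.card_filter, ← Finset.sum_subtype B (fun _ => Iff.rfl)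
    (fun b => if x ∈ b then (1:ℕ) else 0), ← Finset.card_filter]
  rfl

lemma sum_sigma_blocks (x : V)
    (σx : {b : Finset V // b ∈ B ∧ x ∈ b} → Fin (repl B x + 1))
    (hinj : Function.Injective σx) (h0 : ∀ p, σx p ≠ 0)
    (G : Fin (repl B x + 1) → ℂ) :
    ∑ b : {b : Finset V // b ∈ B}, (if h : x ∈ b.1 then G (σx ⟨b.1, b.2, h⟩) else 0)
      = ∑ i ∈ Finset.univ.filter (fun i => i ≠ 0), G i := by
  classical
  set σ'' : {b : Finset V // b ∈ B} → Fin (repl B x + 1) :=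
    fun b => if h : x ∈ b.1 then σx ⟨b.1, b.2, h⟩ else 0 with hσ''
  set s : Finset {b : Finset V // b ∈ B} := Finset.univ.filter (fun b => x ∈ b.1) with hs
  have hinjOn : ∀ p ∈ s, ∀ q ∈ s, σ'' p = σ'' q → p = q := by
    intro p hp q hq hpq
    rw [hs, mem_filter] at hp hq
    rw [hσ''] at hpq
    simp only [dif_pos hp.2, dif_pos hq.2] at hpq
    have h5 := congrArg Subtype.val (hinj hpq)
    exact Subtype.ext h5
  have hcards : s.card = repl B x := card_subtype_filter x
  have himsub : s.image σ'' ⊆ Finset.univ.filter (fun i => i ≠ 0) := by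
    intro i hi
    rw [Finset.mem_image] at hi
    obtain ⟨p, hp, hpi⟩ := hi
    rw [hs, mem_filter] at hp
    rw [mem_filter]
    refine ⟨Finset.mem_univ _, ?_⟩
    rw [← hpi, hσ'']
    simp only [dif_pos hp.2]
    exact h0 _
  have hcardt : (Finset.univ.filter (fun i : Fin (repl B x + 1) => i ≠ 0)).card
      = repl B x := by
    rw [Finset.filter_ne', Finset.card_erase_of_mem (Finset.mem_univ _),
      Finset.card_univ, Fintype.card_fin]
    omega
  have him : s.image σ'' = Finset.univ.filter (fun i => i ≠ 0) := by
    apply Finset.eq_of_subset_of_card_le himsub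
    rw [hcardt, Finset.card_image_of_injOn hinjOn, hcards]
  calc ∑ b : {b : Finset V // b ∈ B}, (if h : x ∈ b.1 then G (σx ⟨b.1, b.2, h⟩) else 0)
      = ∑ b : {b : Finset V // b ∈ B}, (if x ∈ b.1 then G (σ'' b) else 0) := by
        apply Finset.sum_congr rfl
        intro b _
        by_cases h : x ∈ b.1
        · rw [dif_pos h, if_pos h, hσ'']; simp only [dif_pos h]
        · rw [dif_neg h, if_neg h]
    _ = ∑ b ∈ s, G (σ'' b) := (Finset.sum_filter _ _).symm
    _ = ∑ i ∈ s.image σ'', G i := (Finset.sum_image hinjOn).symm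
    _ = _ := by rw [him]

section coh

lemma sum_ite_const (x : V) (c : ℝ) :
    ∑ b : {b : Finset V // b ∈ B}, (if x ∈ b.1 then c else 0) = repl B x * c := by
  rw [← Finset.sum_subtype B (fun _ => Iff.rfl) (fun b => if x ∈ b then c else 0),
    ← Finset.sum_filter, Finset.sum_const, nsmul_eq_mul]
  rfl

lemma con1_norm_sum
    (H : ∀ x : V, Matrix (Fin (repl B x + 1)) (Fin (repl B x + 1)) ℂ)
    (hH : ∀ x : V, IsComplexHadamard (H x))
    (σ : ∀ x : V, {b : Finset V // b ∈ B ∧ x ∈ b} → Fin (repl B x + 1))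
    (x : V) (m : Fin (repl B x + 1)) :
    ∑ b : {b : Finset V // b ∈ B}, ‖con1 B H σ b ⟨x, m⟩‖ ^ 2
      = (repl B x : ℝ) * ((repl B x : ℝ) + 1)⁻¹ := by
  have key : ∀ b : {b : Finset V // b ∈ B}, ‖con1 B H σ b ⟨x, m⟩‖ ^ 2
      = (if x ∈ b.1 then ((repl B x : ℝ) + 1)⁻¹ else 0) := by
    intro b
    by_cases h : x ∈ b.1
    · rw [if_pos h]
      have h1 : con1 B H σ b ⟨x, m⟩
          = ((Real.sqrt ((repl B x : ℝ) + 1))⁻¹ : ℝ) * H x (σ x ⟨b.1, b.2, h⟩) m := by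
        simp [con1, h]
      rw [h1, norm_mul, Complex.norm_real, (hH x).1, mul_one, norm_inv,
        Real.norm_eq_abs, abs_of_nonneg (Real.sqrt_nonneg _), inv_pow,
        Real.sq_sqrt (by positivity)]
    · have h1 : con1 B H σ b ⟨x, m⟩ = 0 := by simp [con1, h]
      rw [if_neg h, h1]
      simp
  rw [Finset.sum_congr rfl (fun b _ => key b), sum_ite_const]

lemma coh_val {K : Finset ℕ} (hPBD : IsPBD B K)
    (H : ∀ x : V, Matrix (Fin (repl B x + 1)) (Fin (repl B x + 1)) ℂ)
    (hH : ∀ x : V, IsComplexHadamard (H x))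
    (σ : ∀ x : V, {b : Finset V // b ∈ B ∧ x ∈ b} → Fin (repl B x + 1))
    (hσinj : ∀ x : V, Function.Injective (σ x))
    (hσ0 : ∀ (x : V) (b : {b : Finset V // b ∈ B ∧ x ∈ b}), σ x b ≠ 0)
    (hrpos : ∀ x : V, 1 ≤ repl B x)
    (x y : V) (jx : Fin (repl B x + 1)) (l : Fin (repl B y + 1))
    (hij : (⟨x, jx⟩ : Σ z : V, Fin (repl B z + 1)) ≠ ⟨y, l⟩) :
    colCoh (con1 B H σ) ⟨x, jx⟩ ⟨y, l⟩
      = (Real.sqrt (repl B x) * Real.sqrt (repl B y))⁻¹ := by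
  have hrx : (0:ℝ) < repl B x := by exact_mod_cast hrpos x
  have hry : (0:ℝ) < repl B y := by exact_mod_cast hrpos y
  have hsx : (0:ℝ) < Real.sqrt ((repl B x : ℝ) + 1) := Real.sqrt_pos.2 (by positivity)
  have hsy : (0:ℝ) < Real.sqrt ((repl B y : ℝ) + 1) := Real.sqrt_pos.2 (by positivity)
  have hden : Real.sqrt (∑ b : {b : Finset V // b ∈ B}, ‖con1 B H σ b ⟨x, jx⟩‖ ^ 2)
      * Real.sqrt (∑ b : {b : Finset V // b ∈ B}, ‖con1 B H σ b ⟨y, l⟩‖ ^ 2)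
      = (Real.sqrt (repl B x) * (Real.sqrt ((repl B x : ℝ) + 1))⁻¹)
      * (Real.sqrt (repl B y) * (Real.sqrt ((repl B y : ℝ) + 1))⁻¹) := by
    rw [con1_norm_sum H hH σ x jx, con1_norm_sum H hH σ y l,
      Real.sqrt_mul (by positivity), Real.sqrt_mul (by positivity),
      Real.sqrt_inv, Real.sqrt_inv]
  by_cases hxy : x = y
  · subst hxy
    have hjl : jx ≠ l := by
      intro h; exact hij (by rw [h])
    set G : Fin (repl B x + 1) → ℂ := fun i =>
      ((((repl B x : ℝ) + 1)⁻¹ : ℝ) : ℂ) * ((starRingEnd ℂ) (H x i jx) * H x i l) with hG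
    have hterm : ∀ b : {b : Finset V // b ∈ B},
        (starRingEnd ℂ) (con1 B H σ b ⟨x, jx⟩) * con1 B H σ b ⟨x, l⟩
        = (if h : x ∈ b.1 then G (σ x ⟨b.1, b.2, h⟩) else 0) := by
      intro b
      by_cases h : x ∈ b.1
      · rw [dif_pos h]
        have h1 : con1 B H σ b ⟨x, jx⟩
            = ((Real.sqrt ((repl B x : ℝ) + 1))⁻¹ : ℝ) * H x (σ x ⟨b.1, b.2, h⟩) jx := by
          simp [con1, h]
        have h2 : con1 B H σ b ⟨x, l⟩
            = ((Real.sqrt ((repl B x : ℝ) + 1))⁻¹ : ℝ) * H x (σ x ⟨b.1, b.2, h⟩) l := by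
          simp [con1, h]
        rw [h1, h2, hG]
        have h3 : ((Real.sqrt ((repl B x : ℝ) + 1))⁻¹) * ((Real.sqrt ((repl B x : ℝ) + 1))⁻¹)
            = ((repl B x : ℝ) + 1)⁻¹ := by
          rw [← mul_inv, Real.mul_self_sqrt (by positivity)]
        simp only [map_mul, Complex.conj_ofReal]
        push_cast [← h3]
        ring
      · rw [dif_neg h]
        have h1 : con1 B H σ b ⟨x, jx⟩ = 0 := by simp [con1, h]
        rw [h1, map_zero, zero_mul]
    rw [colCoh, Finset.sum_congr rfl (fun b _ => hterm b),
      sum_sigma_blocks x (σ x) (hσinj x) (hσ0 x) G, hden]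
    have hfilt : (Finset.univ.filter (fun i : Fin (repl B x + 1) => i ≠ 0))
        = Finset.univ.erase 0 := Finset.filter_ne' _ _
    rw [hfilt, Finset.sum_erase_eq_sub (Finset.mem_univ _)]
    have hall : ∑ i, G i = 0 := by
      rw [hG, ← Finset.mul_sum, had_col (hH x) jx l, if_neg hjl, mul_zero]
    rw [hall, zero_sub, norm_neg, hG]
    simp only [norm_mul, Complex.norm_real, Real.norm_eq_abs,
      abs_of_nonneg (by positivity : (0:ℝ) ≤ ((repl B x : ℝ) + 1)⁻¹)]
    rw [RCLike.norm_conj, (hH x).1, (hH x).1]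
    set u : ℝ := Real.sqrt ((repl B x : ℝ)) with hu
    set w : ℝ := Real.sqrt ((repl B x : ℝ) + 1) with hw
    have hupos : 0 < u := Real.sqrt_pos.2 hrx
    have hwpos : 0 < w := hsx
    have hx2 : w * w = (repl B x : ℝ) + 1 := Real.mul_self_sqrt (by positivity)
    rw [← hx2]
    field_simp
  · obtain ⟨b₀, ⟨hb₀B, hxb₀, hyb₀⟩, huniq⟩ := hPBD.2 x y hxy
    set p₀ : {b : Finset V // b ∈ B} := ⟨b₀, hb₀B⟩ with hp₀
    have hsum : ∑ b : {b : Finset V // b ∈ B},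
        (starRingEnd ℂ) (con1 B H σ b ⟨x, jx⟩) * con1 B H σ b ⟨y, l⟩
        = (starRingEnd ℂ) (con1 B H σ p₀ ⟨x, jx⟩) * con1 B H σ p₀ ⟨y, l⟩ := by
      apply Finset.sum_eq_single_of_mem p₀ (Finset.mem_univ _)
      intro b _ hb
      by_cases hx : x ∈ b.1
      · by_cases hy : y ∈ b.1
        · exact absurd (Subtype.ext (huniq b.1 ⟨b.2, hx, hy⟩)) hb
        · have h1 : con1 B H σ b ⟨y, l⟩ = 0 := by simp [con1, hy]
          rw [h1, mul_zero]
      · have h1 : con1 B H σ b ⟨x, jx⟩ = 0 := by simp [con1, hx]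
        rw [h1, map_zero, zero_mul]
    have hvx : con1 B H σ p₀ ⟨x, jx⟩
        = ((Real.sqrt ((repl B x : ℝ) + 1))⁻¹ : ℝ) * H x (σ x ⟨b₀, hb₀B, hxb₀⟩) jx := by
      simp [con1, hp₀, hxb₀]
    have hvy : con1 B H σ p₀ ⟨y, l⟩
        = ((Real.sqrt ((repl B y : ℝ) + 1))⁻¹ : ℝ) * H y (σ y ⟨b₀, hb₀B, hyb₀⟩) l := by
      simp [con1, hp₀, hyb₀]
    rw [colCoh, hsum, hvx, hvy, hden]
    simp only [map_mul, Complex.conj_ofReal, norm_mul, Complex.norm_real,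
      Real.norm_eq_abs, RCLike.norm_conj]
    rw [(hH x).1, (hH y).1, abs_of_nonneg (by positivity : (0:ℝ) ≤ (Real.sqrt ((repl B x:ℝ)+1))⁻¹),
      abs_of_nonneg (by positivity : (0:ℝ) ≤ (Real.sqrt ((repl B y:ℝ)+1))⁻¹)]
    have h1 : (0:ℝ) < Real.sqrt (repl B x) := Real.sqrt_pos.2 hrx
    have h2 : (0:ℝ) < Real.sqrt (repl B y) := Real.sqrt_pos.2 hry
    field_simp

end coh

end aux

/-- The matrix of Construction con1 built from a `PBD(v,K,1)` with `v ≥ 2` and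
`2 ≤ K_min` is `ε`-equiangular for `ε = (K_max − K_min)/(K_min − 1)`. -/
theorem stmt_17 {V : Type*} [Fintype V] [DecidableEq V]
    (B : Finset (Finset V)) (K : Finset ℕ) (hKne : K.Nonempty)
    (hPBD : IsPBD B K) (hv : 2 ≤ Fintype.card V) (hKmin : 2 ≤ K.min' hKne)
    (H : ∀ x : V, Matrix (Fin (repl B x + 1)) (Fin (repl B x + 1)) ℂ)
    (hH : ∀ x : V, IsComplexHadamard (H x))
    (σ : ∀ x : V, {b : Finset V // b ∈ B ∧ x ∈ b} → Fin (repl B x + 1))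
    (hσinj : ∀ x : V, Function.Injective (σ x))
    (hσ0 : ∀ (x : V) (b : {b : Finset V // b ∈ B ∧ x ∈ b}), σ x b ≠ 0) :
    ∀ i j : Σ x : V, Fin (repl B x + 1), i ≠ j →
      (1 - ((K.max' hKne : ℝ) - (K.min' hKne : ℝ)) / ((K.min' hKne : ℝ) - 1)) *
          welch B.card (∑ x : V, (repl B x + 1)) ≤ colCoh (con1 B H σ) i j ∧
      colCoh (con1 B H σ) i j ≤
        (1 + ((K.max' hKne : ℝ) - (K.min' hKne : ℝ)) / ((K.min' hKne : ℝ) - 1)) *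
          welch B.card (∑ x : V, (repl B x + 1)) := by

  classical
  intro i j hij
  obtain ⟨x, jx⟩ := i
  obtain ⟨y, l⟩ := j
  have hrpos : ∀ z : V, 1 ≤ repl B z := repl_pos hPBD hv
  have hcv := coh_val hPBD H hH σ hσinj hσ0 hrpos x y jx l hij
  set v : ℕ := Fintype.card V with hvdef
  set n : ℕ := B.card with hndef
  set T : ℕ := ∑ b ∈ B, (b.card - 1) with hTdef
  have hm2 : 2 ≤ K.min' hKne := hKmin
  have hmM : K.min' hKne ≤ K.max' hKne := K.min'_le _ (K.max'_mem hKne)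
  have hbcard : ∀ b ∈ B, 2 ≤ b.card := fun b hb =>
    le_trans hKmin (K.min'_le _ (hPBD.1 b hb))
  have hbK : ∀ b ∈ B, K.min' hKne ≤ b.card ∧ b.card ≤ K.max' hKne := fun b hb =>
    ⟨K.min'_le _ (hPBD.1 b hb), K.le_max' _ (hPBD.1 b hb)⟩
  -- n ≥ 1
  have hn1 : 1 ≤ n := by
    obtain ⟨z₁, z₂, hz⟩ := Fintype.exists_pair_of_one_lt_card hv
    obtain ⟨b, hb, -⟩ := hPBD.2 z₁ z₂ hz
    exact Finset.card_pos.2 ⟨b, hb.1⟩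
  -- N = v + T + n
  have hNsum : ∑ z : V, (repl B z + 1) = v + T + n := by
    rw [Finset.sum_add_distrib, repl_sum, Finset.sum_const, Finset.card_univ,
      smul_eq_mul, mul_one]
    have hTn : ∑ b ∈ B, b.card = T + n := by
      rw [hTdef, hndef, Finset.card_eq_sum_ones, ← Finset.sum_add_distrib]
      apply Finset.sum_congr rfl
      intro b hb
      have := hbcard b hb
      omega
    omega
  -- ℕ inequalities
  have h1N : (K.min' hKne - 1) * n ≤ T := by
    rw [hTdef, hndef, Finset.card_eq_sum_ones, Finset.mul_sum]
    exact Finset.sum_le_sum (fun b hb => by have := (hbK b hb).1; omega)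
  have h2N : T ≤ (K.max' hKne - 1) * n := by
    rw [hTdef, hndef, Finset.card_eq_sum_ones, Finset.mul_sum]
    exact Finset.sum_le_sum (fun b hb => by have := (hbK b hb).2; omega)
  have h3N : K.min' hKne * T ≤ v * (v - 1) := by
    rw [← pair_count hPBD, hTdef, Finset.mul_sum]
    exact Finset.sum_le_sum (fun b hb =>
      Nat.mul_le_mul_right _ (hbK b hb).1)
  have h4N : v * (v - 1) ≤ K.max' hKne * T := by
    rw [← pair_count hPBD, hTdef, Finset.mul_sum]
    exact Finset.sum_le_sum (fun b hb =>
      Nat.mul_le_mul_right _ (hbK b hb).2)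
  -- real constants
  set a : ℝ := (K.min' hKne : ℝ) - 1 with ha
  set bR : ℝ := (K.max' hKne : ℝ) - 1 with hbR
  have hm2R : (2:ℝ) ≤ (K.min' hKne : ℝ) := by exact_mod_cast hm2
  have hmMR : (K.min' hKne : ℝ) ≤ (K.max' hKne : ℝ) := by exact_mod_cast hmM
  have ha1 : 1 ≤ a := by rw [ha]; linarith
  have hapos : 0 < a := by linarith
  have hab : a ≤ bR := by rw [ha, hbR]; linarith
  have hbRpos : 0 < bR := by linarith
  have hv2R : (2:ℝ) ≤ (v:ℝ) := by exact_mod_cast hv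
  have hv1pos : (0:ℝ) < (v:ℝ) - 1 := by linarith
  have hn1R : (1:ℝ) ≤ (n:ℝ) := by exact_mod_cast hn1
  have hacast : ((K.min' hKne - 1 : ℕ) : ℝ) = a := by
    rw [Nat.cast_sub (by omega), ha, Nat.cast_one]
  have hbcast : ((K.max' hKne - 1 : ℕ) : ℝ) = bR := by
    rw [Nat.cast_sub (by omega), hbR, Nat.cast_one]
  have hvcast : ((v - 1 : ℕ) : ℝ) = (v:ℝ) - 1 := by
    rw [Nat.cast_sub (by omega), Nat.cast_one]
  have h1R : a * (n:ℝ) ≤ (T:ℝ) := by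
    rw [← hacast]; exact_mod_cast h1N
  have h2R : (T:ℝ) ≤ bR * (n:ℝ) := by
    rw [← hbcast]; exact_mod_cast h2N
  have h3R : (a + 1) * (T:ℝ) ≤ (v:ℝ) * ((v:ℝ) - 1) := by
    have : ((K.min' hKne * T : ℕ) : ℝ) ≤ ((v * (v-1) : ℕ) : ℝ) := by exact_mod_cast h3N
    rw [Nat.cast_mul, Nat.cast_mul, hvcast] at this
    calc (a + 1) * (T:ℝ) = (K.min' hKne : ℝ) * T := by rw [ha]; ring
      _ ≤ _ := this
  have h4R : (v:ℝ) * ((v:ℝ) - 1) ≤ (bR + 1) * (T:ℝ) := by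
    have : ((v * (v-1) : ℕ) : ℝ) ≤ ((K.max' hKne * T : ℕ) : ℝ) := by exact_mod_cast h4N
    rw [Nat.cast_mul, Nat.cast_mul, hvcast] at this
    calc (v:ℝ) * ((v:ℝ) - 1) ≤ (K.max' hKne : ℝ) * T := this
      _ = (bR + 1) * (T:ℝ) := by rw [hbR]; ring
  obtain ⟨hμlo, hμhi⟩ := welch_core ha1 hab hv2R hn1R h1R h2R h3R h4R
  -- identify welch value
  have hμeq : welch n (∑ z : V, (repl B z + 1))
      = Real.sqrt (((v:ℝ) + T) / (((v:ℝ) + T + n - 1) * n)) := by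
    rw [hNsum, welch]
    congr 1
    push_cast
    ring_nf
  set μ : ℝ := Real.sqrt (((v:ℝ) + T) / (((v:ℝ) + T + n - 1) * n)) with hμ
  have hμ0 : 0 ≤ μ := Real.sqrt_nonneg _
  -- coherence bounds
  have hrx1 : (1:ℝ) ≤ (repl B x : ℝ) := by exact_mod_cast hrpos x
  have hry1 : (1:ℝ) ≤ (repl B y : ℝ) := by exact_mod_cast hrpos y
  have hreplb : ∀ z : V, a * (repl B z : ℝ) ≤ (v:ℝ) - 1 ∧
      (v:ℝ) - 1 ≤ bR * (repl B z : ℝ) := by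
    intro z
    obtain ⟨hb1, hb2⟩ := repl_bounds hKne hPBD z
    constructor
    · rw [← hacast, ← hvcast]; exact_mod_cast hb1
    · rw [← hbcast, ← hvcast]; exact_mod_cast hb2
  have hsprod : Real.sqrt (repl B x) * Real.sqrt (repl B y)
      = Real.sqrt ((repl B x : ℝ) * (repl B y : ℝ)) :=
    (Real.sqrt_mul (by positivity) _).symm
  have hspos : (0:ℝ) < Real.sqrt ((repl B x : ℝ) * (repl B y : ℝ)) :=
    Real.sqrt_pos.2 (by nlinarith)
  have hc1 : a / ((v:ℝ) - 1) ≤ (Real.sqrt (repl B x) * Real.sqrt (repl B y))⁻¹ := by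
    rw [hsprod]
    have hx : (repl B x : ℝ) ≤ ((v:ℝ) - 1) / a := by
      rw [le_div_iff₀ hapos]; linarith [(hreplb x).1]
    have hy : (repl B y : ℝ) ≤ ((v:ℝ) - 1) / a := by
      rw [le_div_iff₀ hapos]; linarith [(hreplb y).1]
    have hle : Real.sqrt ((repl B x : ℝ) * (repl B y : ℝ)) ≤ ((v:ℝ) - 1) / a := by
      calc Real.sqrt ((repl B x : ℝ) * (repl B y : ℝ))
          ≤ Real.sqrt ((((v:ℝ) - 1) / a) ^ 2) := by
            apply Real.sqrt_le_sqrt; rw [sq]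
            apply mul_le_mul hx hy (by positivity) (by positivity)
        _ = ((v:ℝ) - 1) / a := Real.sqrt_sq (by positivity)
    calc a / ((v:ℝ) - 1) = (((v:ℝ) - 1) / a)⁻¹ := by rw [inv_div]
      _ ≤ _ := inv_anti₀ hspos hle
  have hc2 : (Real.sqrt (repl B x) * Real.sqrt (repl B y))⁻¹ ≤ bR / ((v:ℝ) - 1) := by
    rw [hsprod]
    have hx : ((v:ℝ) - 1) / bR ≤ (repl B x : ℝ) := by
      rw [div_le_iff₀ hbRpos]; linarith [(hreplb x).2]
    have hy : ((v:ℝ) - 1) / bR ≤ (repl B y : ℝ) := by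
      rw [div_le_iff₀ hbRpos]; linarith [(hreplb y).2]
    have hle : ((v:ℝ) - 1) / bR ≤ Real.sqrt ((repl B x : ℝ) * (repl B y : ℝ)) := by
      calc ((v:ℝ) - 1) / bR = Real.sqrt ((((v:ℝ) - 1) / bR) ^ 2) :=
            (Real.sqrt_sq (by positivity)).symm
        _ ≤ _ := by
            apply Real.sqrt_le_sqrt; rw [sq]
            apply mul_le_mul hx hy (by positivity) (by positivity)
    calc (Real.sqrt ((repl B x : ℝ) * (repl B y : ℝ)))⁻¹
        ≤ (((v:ℝ) - 1) / bR)⁻¹ := inv_anti₀ (by positivity) hle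
      _ = bR / ((v:ℝ) - 1) := by rw [inv_div]
  have hc0 : (0:ℝ) ≤ (Real.sqrt (repl B x) * Real.sqrt (repl B y))⁻¹ := by
    rw [hsprod]; positivity
  -- epsilon
  have hEeq : ((K.max' hKne : ℝ) - (K.min' hKne : ℝ)) / ((K.min' hKne : ℝ) - 1)
      = (bR - a) / a := by rw [ha, hbR]; ring_nf
  rw [hcv, hEeq, hμeq]
  constructor
  · rcases le_or_gt (2 * a - bR) 0 with hcase | hcase
    · have h1E : 1 - (bR - a) / a ≤ 0 := by
        rw [sub_nonpos, le_div_iff₀ hapos]; linarith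
      nlinarith
    · have h1E : (0:ℝ) ≤ 1 - (bR - a) / a := by
        rw [sub_nonneg, div_le_iff₀ hapos]; linarith
      calc (1 - (bR - a) / a) * μ ≤ (1 - (bR - a) / a) * (bR / ((v:ℝ) - 1)) :=
            mul_le_mul_of_nonneg_left hμhi h1E
        _ ≤ a / ((v:ℝ) - 1) := by
            rw [show (1 - (bR - a) / a) = (2 * a - bR) / a from by field_simp; ring,
              div_mul_div_comm, div_le_div_iff₀ (by positivity) hv1pos]
            nlinarith [mul_nonneg (sq_nonneg (a - bR)) hv1pos.le]
        _ ≤ _ := hc1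
  · have hbdiva : (0:ℝ) ≤ bR / a := by positivity
    calc (Real.sqrt (repl B x) * Real.sqrt (repl B y))⁻¹
        ≤ bR / ((v:ℝ) - 1) := hc2
      _ = (bR / a) * (a / ((v:ℝ) - 1)) := by field_simp
      _ ≤ (bR / a) * μ := mul_le_mul_of_nonneg_left hμlo hbdiva
      _ = (1 + (bR - a) / a) * μ := by
          congr 1
          field_simp
          ring
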